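/- Let (H,α) be a monoidal Hom-Hopf algebra over a commutative ring k and let (N,ν) be simultaneously a right (H,α)-Hom-module (action n◁h) and a right (H,α)-Hom-comodule (coaction n↦n₍₀₎⊗n₍₁₎) satisfying the twisted Yetter-Drinfel'd condition n₍₀₎◁α⁻¹(h₁)⊗n₍₁₎α⁻¹(h₂)=(n◁h₂)₍₀₎⊗α⁻¹(h₁·(n◁h₂)₍₁₎). Then H⊗N with bijection α⊗ν, left action h·(g⊗n)=α⁻¹(h)g⊗ν(n), right action (g⊗n)·h=gh₁⊗(n◁h₂), left coaction ρ(g⊗n)=α(g₁)⊗(g₂⊗ν⁻¹(n)), and right coaction σ(g⊗n)=(g₁⊗n₍₀₎)⊗g₂n₍₁₎ is a bicovariant (H,α)-Hom-bimodule; in particular σ is Hom-coassociative and Hom-counital, ρ and σ Hom-commute, and σ((h·x)·α(g))=α(h₁)·(x_[0]·g₁)⊗α(h₂)(x_[1]g₂) for all x∈H⊗N. -/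

import Mathlib

open TensorProduct

noncomputable def tmul2 {k A B C D E F : Type*} [CommRing k]
    [AddCommGroup A] [AddCommGroup B] [AddCommGroup C] [AddCommGroup D]
    [AddCommGroup E] [AddCommGroup F]
    [Module k A] [Module k B] [Module k C] [Module k D] [Module k E] [Module k F]
    (f : A →ₗ[k] C →ₗ[k] E) (g : B →ₗ[k] D →ₗ[k] F) :
    (A ⊗[k] B) →ₗ[k] (C ⊗[k] D) →ₗ[k] (E ⊗[k] F) :=
  TensorProduct.curry
    ((TensorProduct.map (TensorProduct.lift f) (TensorProduct.lift g)) ∘ₗ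
      (TensorProduct.tensorTensorTensorComm k A B C D).toLinearMap)

/-- A monoidal Hom-Hopf algebra over a commutative ring `k`. -/
structure MonHomHopf (k H : Type*) [CommRing k] [AddCommGroup H] [Module k H] where
  α : H ≃ₗ[k] H
  mul : H →ₗ[k] H →ₗ[k] H
  one : H
  comul : H →ₗ[k] H ⊗[k] H
  counit : H →ₗ[k] k
  S : H →ₗ[k] H
  alpha_mul : ∀ g h, α (mul g h) = mul (α g) (α h)
  alpha_one : α one = one
  hom_assoc : ∀ g h l, mul (α g) (mul h l) = mul (mul g h) (α l)
  mul_one' : ∀ h, mul h one = α h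
  one_mul' : ∀ h, mul one h = α h
  comul_alpha : ∀ h, comul (α h)
    = TensorProduct.map α.toLinearMap α.toLinearMap (comul h)
  counit_alpha : ∀ h, counit (α h) = counit h
  hom_coassoc : ∀ h,
    (TensorProduct.assoc k H H H) ((TensorProduct.map comul α.symm.toLinearMap) (comul h))
      = (TensorProduct.map α.symm.toLinearMap comul) (comul h)
  counit_comul_left : ∀ h,
    (TensorProduct.lid k H) ((TensorProduct.map counit LinearMap.id) (comul h)) = α.symm h
  counit_comul_right : ∀ h,
    (TensorProduct.rid k H) ((TensorProduct.map LinearMap.id counit) (comul h)) = α.symm h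
  comul_mul : ∀ g h, comul (mul g h) = tmul2 mul mul (comul g) (comul h)
  comul_one : comul one = one ⊗ₜ[k] one
  counit_mul : ∀ g h, counit (mul g h) = counit g * counit h
  counit_one : counit one = 1
  antipode_left : ∀ h,
    (TensorProduct.lift mul) ((TensorProduct.map S LinearMap.id) (comul h)) = counit h • one
  antipode_right : ∀ h,
    (TensorProduct.lift mul) ((TensorProduct.map LinearMap.id S) (comul h)) = counit h • one
  S_alpha : ∀ h, S (α h) = α (S h)

/-- A bicovariant `(H,α)`-Hom-bimodule. -/
structure BicovBimod {k H : Type*} [CommRing k] [AddCommGroup H] [Module k H]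
    (A : MonHomHopf k H) (M : Type*) [AddCommGroup M] [Module k M] where
  μ : M ≃ₗ[k] M
  lact : H →ₗ[k] M →ₗ[k] M
  ract : M →ₗ[k] H →ₗ[k] M
  lact_assoc : ∀ g h m, lact (A.α g) (lact h m) = lact (A.mul g h) (μ m)
  lact_one : ∀ m, lact A.one m = μ m
  mu_lact : ∀ h m, μ (lact h m) = lact (A.α h) (μ m)
  ract_assoc : ∀ m g h, ract (μ m) (A.mul g h) = ract (ract m g) (A.α h)
  ract_one : ∀ m, ract m A.one = μ m
  mu_ract : ∀ m h, μ (ract m h) = ract (μ m) (A.α h)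
  bimod : ∀ h m g, ract (lact h m) (A.α g) = lact (A.α h) (ract m g)
  rho : M →ₗ[k] H ⊗[k] M
  rho_coassoc : ∀ m,
    (TensorProduct.map (LinearMap.id : H →ₗ[k] H) rho) (rho m)
      = (TensorProduct.assoc k H H M)
          ((TensorProduct.map
              ((TensorProduct.map A.α.toLinearMap (LinearMap.id : H →ₗ[k] H)) ∘ₗ A.comul)
              μ.symm.toLinearMap) (rho m))
  rho_counit : ∀ m,
    (TensorProduct.lid k M) ((TensorProduct.map A.counit (LinearMap.id : M →ₗ[k] M)) (rho m))
      = μ.symm m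
  rho_mu : ∀ m, rho (μ m) = TensorProduct.map A.α.toLinearMap μ.toLinearMap (rho m)
  rho_cov : ∀ h g m,
    rho (ract (lact h m) (A.α g))
      = tmul2 A.mul lact (A.comul (A.α h)) (tmul2 A.mul ract (rho m) (A.comul g))
  sigma : M →ₗ[k] M ⊗[k] H
  sigma_coassoc : ∀ m,
    (TensorProduct.map sigma A.α.symm.toLinearMap) (sigma m)
      = (TensorProduct.assoc k M H H).symm
          ((TensorProduct.map μ.symm.toLinearMap A.comul) (sigma m))
  sigma_counit : ∀ m,
    (TensorProduct.rid k M) ((TensorProduct.map (LinearMap.id : M →ₗ[k] M) A.counit) (sigma m))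
      = μ.symm m
  sigma_mu : ∀ m, sigma (μ m) = TensorProduct.map μ.toLinearMap A.α.toLinearMap (sigma m)
  sigma_cov : ∀ h g m,
    sigma (ract (lact h m) (A.α g))
      = tmul2 lact A.mul (A.comul (A.α h)) (tmul2 ract A.mul (sigma m) (A.comul g))
  homcomm : ∀ m,
    (TensorProduct.map (LinearMap.id : H →ₗ[k] H) sigma) (rho m)
      = (TensorProduct.assoc k H M H)
          ((TensorProduct.map
              ((TensorProduct.map A.α.toLinearMap (LinearMap.id : M →ₗ[k] M)) ∘ₗ rho)
              A.α.symm.toLinearMap) (sigma m))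

/-- A right-right Yetter-Drinfel'd Hom-module over `MonHomHopf`. -/
structure YDmod {k H : Type*} [CommRing k] [AddCommGroup H] [Module k H]
    (A : MonHomHopf k H) (N : Type*) [AddCommGroup N] [Module k N] where
  ν : N ≃ₗ[k] N
  act : N →ₗ[k] H →ₗ[k] N
  act_assoc : ∀ n g h, act (ν n) (A.mul g h) = act (act n g) (A.α h)
  act_one : ∀ n, act n A.one = ν n
  nu_act : ∀ n h, ν (act n h) = act (ν n) (A.α h)
  coact : N →ₗ[k] N ⊗[k] H
  coact_coassoc : ∀ n,
    (TensorProduct.map coact A.α.symm.toLinearMap) (coact n)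
      = (TensorProduct.assoc k N H H).symm
          ((TensorProduct.map ν.symm.toLinearMap A.comul) (coact n))
  coact_counit : ∀ n,
    (TensorProduct.rid k N) ((TensorProduct.map (LinearMap.id : N →ₗ[k] N) A.counit) (coact n))
      = ν.symm n
  coact_nu : ∀ n, coact (ν n) = TensorProduct.map ν.toLinearMap A.α.toLinearMap (coact n)
  yd : ∀ n h,
    tmul2 (act.compl₂ A.α.symm.toLinearMap) (A.mul.compl₂ A.α.symm.toLinearMap)
        (coact n) (A.comul h)
      = ((TensorProduct.map (LinearMap.id : N →ₗ[k] N)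
            (A.α.symm.toLinearMap ∘ₗ TensorProduct.lift A.mul)) ∘ₗ
          (TensorProduct.leftComm k H N H).toLinearMap)
          ((TensorProduct.map (LinearMap.id : H →ₗ[k] H) (coact ∘ₗ act n)) (A.comul h))

/-- Left action `h · (g ⊗ n) = α⁻¹(h) g ⊗ ν(n)` on `H ⊗ N`. -/
noncomputable def freeLact {k H N : Type*} [CommRing k] [AddCommGroup H] [Module k H]
    [AddCommGroup N] [Module k N] (A : MonHomHopf k H) (ν : N ≃ₗ[k] N) :
    H →ₗ[k] (H ⊗[k] N) →ₗ[k] (H ⊗[k] N) :=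
  TensorProduct.curry
    ((TensorProduct.map (TensorProduct.lift (A.mul.comp A.α.symm.toLinearMap)) ν.toLinearMap) ∘ₗ
      (TensorProduct.assoc k H H N).symm.toLinearMap)

/-- Right action `(g ⊗ n) · h = g h₁ ⊗ (n ◁ h₂)` on `H ⊗ N`. -/
noncomputable def freeRact {k H N : Type*} [CommRing k] [AddCommGroup H] [Module k H]
    [AddCommGroup N] [Module k N] (A : MonHomHopf k H) (act : N →ₗ[k] H →ₗ[k] N) :
    (H ⊗[k] N) →ₗ[k] H →ₗ[k] (H ⊗[k] N) :=
  (tmul2 A.mul act).compl₂ A.comul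

/-- Left coaction `ρ(g ⊗ n) = α(g₁) ⊗ (g₂ ⊗ ν⁻¹(n))` on `H ⊗ N`. -/
noncomputable def freeRho {k H N : Type*} [CommRing k] [AddCommGroup H] [Module k H]
    [AddCommGroup N] [Module k N] (A : MonHomHopf k H) (ν : N ≃ₗ[k] N) :
    (H ⊗[k] N) →ₗ[k] H ⊗[k] (H ⊗[k] N) :=
  (TensorProduct.assoc k H H N).toLinearMap ∘ₗ
    (TensorProduct.map
      ((TensorProduct.map A.α.toLinearMap (LinearMap.id : H →ₗ[k] H)) ∘ₗ A.comul)
      ν.symm.toLinearMap)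

/-- Right coaction `σ(g ⊗ n) = (g₁ ⊗ n₍₀₎) ⊗ g₂ n₍₁₎` on `H ⊗ N`. -/
noncomputable def freeSigma {k H N : Type*} [CommRing k] [AddCommGroup H] [Module k H]
    [AddCommGroup N] [Module k N] (A : MonHomHopf k H) (coact : N →ₗ[k] N ⊗[k] H) :
    (H ⊗[k] N) →ₗ[k] (H ⊗[k] N) ⊗[k] H :=
  (TensorProduct.map (LinearMap.id : H ⊗[k] N →ₗ[k] H ⊗[k] N) (TensorProduct.lift A.mul)) ∘ₗ
    (TensorProduct.tensorTensorTensorComm k H H N H).toLinearMap ∘ₗ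
    (TensorProduct.map A.comul coact)


section Helpers

variable {k H N : Type*} [CommRing k] [AddCommGroup H] [Module k H]
  [AddCommGroup N] [Module k N]

@[simp] lemma tmul2_tmul {M1 M2 M3 M4 M5 M6 : Type*}
    [AddCommGroup M1] [AddCommGroup M2] [AddCommGroup M3] [AddCommGroup M4]
    [AddCommGroup M5] [AddCommGroup M6]
    [Module k M1] [Module k M2] [Module k M3] [Module k M4] [Module k M5] [Module k M6]
    (f : M1 →ₗ[k] M3 →ₗ[k] M5) (g : M2 →ₗ[k] M4 →ₗ[k] M6)
    (a : M1) (b : M2) (c : M3) (d : M4) :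
    tmul2 f g (a ⊗ₜ[k] b) (c ⊗ₜ[k] d) = f a c ⊗ₜ[k] g b d := by
  simp [tmul2]


lemma tmul2_tmul_left {M1 M2 M3 M4 M5 M6 : Type*}
    [AddCommGroup M1] [AddCommGroup M2] [AddCommGroup M3] [AddCommGroup M4]
    [AddCommGroup M5] [AddCommGroup M6]
    [Module k M1] [Module k M2] [Module k M3] [Module k M4] [Module k M5] [Module k M6]
    (f : M1 →ₗ[k] M3 →ₗ[k] M5) (g : M2 →ₗ[k] M4 →ₗ[k] M6)
    (a : M1) (b : M2) (Y : M3 ⊗[k] M4) :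
    tmul2 f g (a ⊗ₜ[k] b) Y = TensorProduct.map (f a) (g b) Y := by
  induction Y using TensorProduct.induction_on with
  | zero => simp
  | tmul c d => simp
  | add x y hx hy => simp [map_add, hx, hy]

lemma tmul2_tmul_right {M1 M2 M3 M4 M5 M6 : Type*}
    [AddCommGroup M1] [AddCommGroup M2] [AddCommGroup M3] [AddCommGroup M4]
    [AddCommGroup M5] [AddCommGroup M6]
    [Module k M1] [Module k M2] [Module k M3] [Module k M4] [Module k M5] [Module k M6]
    (f : M1 →ₗ[k] M3 →ₗ[k] M5) (g : M2 →ₗ[k] M4 →ₗ[k] M6)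
    (X : M1 ⊗[k] M2) (c : M3) (d : M4) :
    tmul2 f g X (c ⊗ₜ[k] d) = TensorProduct.map (f.flip c) (g.flip d) X := by
  induction X using TensorProduct.induction_on with
  | zero => simp
  | tmul a b => simp
  | add x y hx hy => simp [map_add, LinearMap.add_apply, hx, hy]

@[simp] lemma applyl_apply {M1 M2 : Type*} [AddCommGroup M1] [AddCommGroup M2]
    [Module k M1] [Module k M2] (x : M1) (f : M1 →ₗ[k] M2) :
    LinearMap.applyₗ (R := k) x f = f x := rfl

variable (A : MonHomHopf k H) (Y : YDmod A N)


lemma alphaSymm_one : A.α.symm A.one = A.one := by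
  conv_lhs => rw [← A.alpha_one]
  exact A.α.symm_apply_apply _

lemma alphaSymm_mul (g h : H) :
    A.α.symm (A.mul g h) = A.mul (A.α.symm g) (A.α.symm h) := by
  apply A.α.injective
  rw [A.α.apply_symm_apply, A.alpha_mul, A.α.apply_symm_apply, A.α.apply_symm_apply]

lemma comul_alphaSymm (h : H) :
    A.comul (A.α.symm h)
      = TensorProduct.map A.α.symm.toLinearMap A.α.symm.toLinearMap (A.comul h) := by
  apply (TensorProduct.congr A.α A.α).injective
  have h1 : ∀ x : H ⊗[k] H, (TensorProduct.congr A.α A.α) x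
      = TensorProduct.map A.α.toLinearMap A.α.toLinearMap x := fun x => rfl
  rw [h1, h1, ← A.comul_alpha, A.α.apply_symm_apply,
    ← LinearMap.comp_apply, ← TensorProduct.map_comp]
  have : A.α.toLinearMap ∘ₗ A.α.symm.toLinearMap = LinearMap.id := by
    ext x; simp
  rw [this, TensorProduct.map_id, LinearMap.id_apply]

lemma counit_alphaSymm (h : H) : A.counit (A.α.symm h) = A.counit h := by
  conv_rhs => rw [← A.α.apply_symm_apply h, A.counit_alpha]

lemma coact_nuSymm (n : N) :
    Y.coact (Y.ν.symm n)
      = TensorProduct.map Y.ν.symm.toLinearMap A.α.symm.toLinearMap (Y.coact n) := by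
  apply (TensorProduct.congr Y.ν A.α).injective
  have h1 : ∀ x : N ⊗[k] H, (TensorProduct.congr Y.ν A.α) x
      = TensorProduct.map Y.ν.toLinearMap A.α.toLinearMap x := fun x => rfl
  rw [h1, h1, ← Y.coact_nu, Y.ν.apply_symm_apply,
    ← LinearMap.comp_apply, ← TensorProduct.map_comp]
  have h2 : Y.ν.toLinearMap ∘ₗ Y.ν.symm.toLinearMap = LinearMap.id := by ext x; simp
  have h3 : A.α.toLinearMap ∘ₗ A.α.symm.toLinearMap = LinearMap.id := by ext x; simp
  rw [h2, h3, TensorProduct.map_id, LinearMap.id_apply]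

lemma nuSymm_act (n : N) (h : H) :
    Y.ν.symm (Y.act n h) = Y.act (Y.ν.symm n) (A.α.symm h) := by
  apply Y.ν.injective
  rw [Y.ν.apply_symm_apply, Y.nu_act, Y.ν.apply_symm_apply, A.α.apply_symm_apply]

@[simp] lemma freeLact_tmul (h g : H) (n : N) :
    freeLact A Y.ν h (g ⊗ₜ[k] n) = A.mul (A.α.symm h) g ⊗ₜ[k] Y.ν n := by
  simp [freeLact]

@[simp] lemma freeRact_apply (x : H ⊗[k] N) (h : H) :
    freeRact A Y.act x h = tmul2 A.mul Y.act x (A.comul h) := rfl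

lemma freeRho_tmul (g : H) (n : N) :
    freeRho A Y.ν (g ⊗ₜ[k] n)
      = (TensorProduct.assoc k H H N)
          ((TensorProduct.map A.α.toLinearMap LinearMap.id (A.comul g)) ⊗ₜ[k] Y.ν.symm n) := by
  simp [freeRho]

lemma freeSigma_tmul (g : H) (n : N) :
    freeSigma A Y.coact (g ⊗ₜ[k] n)
      = (TensorProduct.map LinearMap.id (TensorProduct.lift A.mul))
          ((TensorProduct.tensorTensorTensorComm k H H N H)
            ((A.comul g) ⊗ₜ[k] (Y.coact n))) := by
  simp [freeSigma]


lemma freeSigma_tmul2 (g : H) (n : N) :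
    freeSigma A Y.coact (g ⊗ₜ[k] n)
      = tmul2 (TensorProduct.mk k H N) A.mul (A.comul g) (Y.coact n) := by
  rw [freeSigma_tmul]
  generalize A.comul g = w
  generalize Y.coact n = v
  induction w using TensorProduct.induction_on with
  | zero => simp
  | tmul a b =>
      induction v using TensorProduct.induction_on with
      | zero => simp
      | tmul c d => simp
      | add x y hx hy => simp [tmul_add, map_add, hx, hy]
  | add x y hx hy => simp [add_tmul, map_add, LinearMap.add_apply, hx, hy]

lemma free_lact_assoc (g h : H) (m : H ⊗[k] N) :
    freeLact A Y.ν (A.α g) (freeLact A Y.ν h m)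
      = freeLact A Y.ν (A.mul g h) ((TensorProduct.congr A.α Y.ν) m) := by
  induction m using TensorProduct.induction_on with
  | zero => simp
  | tmul a n =>
      simp only [freeLact_tmul, TensorProduct.congr_tmul, A.α.symm_apply_apply,
        alphaSymm_mul]
      have e := A.hom_assoc (A.α.symm g) (A.α.symm h) a
      rw [A.α.apply_symm_apply] at e
      rw [e]
  | add x y hx hy => simp [hx, hy]

lemma free_lact_one (m : H ⊗[k] N) :
    freeLact A Y.ν A.one m = (TensorProduct.congr A.α Y.ν) m := by
  induction m using TensorProduct.induction_on with
  | zero => simp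
  | tmul a n => simp [alphaSymm_one, A.one_mul']
  | add x y hx hy => simp [hx, hy]

lemma free_mu_lact (h : H) (m : H ⊗[k] N) :
    (TensorProduct.congr A.α Y.ν) (freeLact A Y.ν h m)
      = freeLact A Y.ν (A.α h) ((TensorProduct.congr A.α Y.ν) m) := by
  induction m using TensorProduct.induction_on with
  | zero => simp
  | tmul a n => simp [A.alpha_mul, A.α.symm_apply_apply]
  | add x y hx hy => simp [hx, hy]

lemma free_ract_assoc (m : H ⊗[k] N) (g h : H) :
    freeRact A Y.act ((TensorProduct.congr A.α Y.ν) m) (A.mul g h)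
      = freeRact A Y.act (freeRact A Y.act m g) (A.α h) := by
  induction m using TensorProduct.induction_on with
  | zero => simp
  | tmul a n =>
      simp only [freeRact_apply, TensorProduct.congr_tmul, A.comul_mul, A.comul_alpha]
      generalize A.comul g = w
      generalize A.comul h = v
      induction w using TensorProduct.induction_on with
      | zero => simp
      | tmul w1 w2 =>
          induction v using TensorProduct.induction_on with
          | zero => simp
          | tmul v1 v2 =>
              simp only [tmul2_tmul, TensorProduct.map_tmul, LinearEquiv.coe_coe, LinearEquiv.coe_toLinearMap]
              rw [A.hom_assoc, Y.act_assoc]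
          | add x y hx hy => simp only [map_add, LinearMap.add_apply, hx, hy]
      | add x y hx hy => simp only [map_add, LinearMap.add_apply, hx, hy]
  | add x y hx hy => simp [hx, hy]

lemma free_ract_one (m : H ⊗[k] N) :
    freeRact A Y.act m A.one = (TensorProduct.congr A.α Y.ν) m := by
  induction m using TensorProduct.induction_on with
  | zero => simp
  | tmul a n => simp [A.comul_one, A.mul_one', Y.act_one]
  | add x y hx hy => simp [hx, hy]

lemma free_mu_ract (m : H ⊗[k] N) (h : H) :
    (TensorProduct.congr A.α Y.ν) (freeRact A Y.act m h)
      = freeRact A Y.act ((TensorProduct.congr A.α Y.ν) m) (A.α h) := by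
  induction m using TensorProduct.induction_on with
  | zero => simp
  | tmul a n =>
      simp only [freeRact_apply, TensorProduct.congr_tmul, A.comul_alpha]
      generalize A.comul h = w
      induction w using TensorProduct.induction_on with
      | zero => simp
      | tmul w1 w2 =>
          simp only [tmul2_tmul, TensorProduct.map_tmul, TensorProduct.congr_tmul,
            LinearEquiv.coe_coe, LinearEquiv.coe_toLinearMap]
          rw [A.alpha_mul, Y.nu_act]
      | add x y hx hy => simp only [map_add, LinearMap.add_apply, hx, hy]
  | add x y hx hy =>
      simp only [freeRact_apply] at hx hy
      simp [hx, hy]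

lemma free_bimod (h : H) (m : H ⊗[k] N) (g : H) :
    freeRact A Y.act (freeLact A Y.ν h m) (A.α g)
      = freeLact A Y.ν (A.α h) (freeRact A Y.act m g) := by
  induction m using TensorProduct.induction_on with
  | zero => simp
  | tmul a n =>
      simp only [freeRact_apply, freeLact_tmul, A.comul_alpha]
      generalize A.comul g = w
      induction w using TensorProduct.induction_on with
      | zero => simp
      | tmul w1 w2 =>
          simp only [tmul2_tmul, TensorProduct.map_tmul, freeLact_tmul,
            LinearEquiv.coe_coe, LinearEquiv.coe_toLinearMap, A.α.symm_apply_apply]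
          have e := A.hom_assoc (A.α.symm h) a w1
          rw [A.α.apply_symm_apply] at e
          rw [← e, Y.nu_act]
      | add x y hx hy => simp only [map_add, LinearMap.add_apply, hx, hy]
  | add x y hx hy => simp [hx, hy]


lemma free_rho_counit (m : H ⊗[k] N) :
    (TensorProduct.lid k (H ⊗[k] N))
        ((TensorProduct.map A.counit (LinearMap.id : H ⊗[k] N →ₗ[k] H ⊗[k] N))
          (freeRho A Y.ν m))
      = (TensorProduct.congr A.α Y.ν).symm m := by
  induction m using TensorProduct.induction_on with
  | zero => simp
  | tmul a n =>
      rw [freeRho_tmul]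
      have key : ∀ w : H ⊗[k] H,
          (TensorProduct.lid k (H ⊗[k] N))
            ((TensorProduct.map A.counit (LinearMap.id : H ⊗[k] N →ₗ[k] H ⊗[k] N))
              ((TensorProduct.assoc k H H N)
                ((TensorProduct.map A.α.toLinearMap LinearMap.id w) ⊗ₜ[k] Y.ν.symm n)))
          = ((TensorProduct.lid k H) ((TensorProduct.map A.counit LinearMap.id) w)) ⊗ₜ[k]
              Y.ν.symm n := by
        intro w
        induction w using TensorProduct.induction_on with
        | zero => simp
        | tmul w1 w2 =>
            simp [A.counit_alpha, TensorProduct.smul_tmul']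
        | add x y hx hy => simp only [map_add, TensorProduct.add_tmul, hx, hy]
      rw [key, A.counit_comul_left]
      simp [TensorProduct.congr_symm_tmul]
  | add x y hx hy => simp [hx, hy]

lemma free_rho_mu (m : H ⊗[k] N) :
    freeRho A Y.ν ((TensorProduct.congr A.α Y.ν) m)
      = TensorProduct.map A.α.toLinearMap (TensorProduct.congr A.α Y.ν).toLinearMap
          (freeRho A Y.ν m) := by
  induction m using TensorProduct.induction_on with
  | zero => simp
  | tmul a n =>
      rw [TensorProduct.congr_tmul, freeRho_tmul, freeRho_tmul, A.comul_alpha]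
      generalize A.comul a = w
      induction w using TensorProduct.induction_on with
      | zero => simp
      | tmul w1 w2 =>
          simp [TensorProduct.congr_tmul]
      | add x y hx hy =>
          simp only [map_add, TensorProduct.add_tmul, hx, hy]
  | add x y hx hy => simp [hx, hy]

lemma free_sigma_counit (m : H ⊗[k] N) :
    (TensorProduct.rid k (H ⊗[k] N))
        ((TensorProduct.map (LinearMap.id : H ⊗[k] N →ₗ[k] H ⊗[k] N) A.counit)
          (freeSigma A Y.coact m))
      = (TensorProduct.congr A.α Y.ν).symm m := by
  induction m using TensorProduct.induction_on with
  | zero => simp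
  | tmul a n =>
      rw [freeSigma_tmul2]
      have key : ∀ (w : H ⊗[k] H) (v : N ⊗[k] H),
          (TensorProduct.rid k (H ⊗[k] N))
            ((TensorProduct.map (LinearMap.id : H ⊗[k] N →ₗ[k] H ⊗[k] N) A.counit)
              (tmul2 (TensorProduct.mk k H N) A.mul w v))
          = ((TensorProduct.rid k H) ((TensorProduct.map LinearMap.id A.counit) w)) ⊗ₜ[k]
              ((TensorProduct.rid k N) ((TensorProduct.map LinearMap.id A.counit) v)) := by
        intro w v
        induction w using TensorProduct.induction_on with
        | zero => simp
        | tmul a1 a2 =>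
            induction v using TensorProduct.induction_on with
            | zero => simp
            | tmul n0 n1 =>
                simp [A.counit_mul, TensorProduct.smul_tmul', smul_smul,
                  TensorProduct.tmul_smul, mul_comm]
            | add x y hx hy =>
                simp only [map_add, LinearMap.add_apply, TensorProduct.tmul_add, hx, hy]
        | add x y hx hy =>
            simp only [map_add, LinearMap.add_apply, TensorProduct.add_tmul, hx, hy]
      rw [key, A.counit_comul_right, Y.coact_counit]
      simp [TensorProduct.congr_symm_tmul]
  | add x y hx hy => simp [hx, hy]

lemma free_sigma_mu (m : H ⊗[k] N) :
    freeSigma A Y.coact ((TensorProduct.congr A.α Y.ν) m)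
      = TensorProduct.map (TensorProduct.congr A.α Y.ν).toLinearMap A.α.toLinearMap
          (freeSigma A Y.coact m) := by
  induction m using TensorProduct.induction_on with
  | zero => simp
  | tmul a n =>
      rw [TensorProduct.congr_tmul, freeSigma_tmul2, freeSigma_tmul2, A.comul_alpha,
        Y.coact_nu]
      generalize A.comul a = w
      generalize Y.coact n = v
      induction w using TensorProduct.induction_on with
      | zero => simp
      | tmul a1 a2 =>
          induction v using TensorProduct.induction_on with
          | zero => simp
          | tmul n0 n1 =>
              simp [TensorProduct.congr_tmul, A.alpha_mul]
          | add x y hx hy =>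
              simp only [map_add, LinearMap.add_apply, hx, hy]
      | add x y hx hy =>
          simp only [map_add, LinearMap.add_apply, hx, hy]
  | add x y hx hy => simp [hx, hy]


lemma congr_symm_toLinearMap :
    (TensorProduct.congr A.α Y.ν).symm.toLinearMap
      = TensorProduct.map A.α.symm.toLinearMap Y.ν.symm.toLinearMap := rfl

lemma congr_toLinearMap :
    (TensorProduct.congr A.α Y.ν).toLinearMap
      = TensorProduct.map A.α.toLinearMap Y.ν.toLinearMap := rfl

lemma assoc_map_mk (n' : N) : ∀ v : H ⊗[k] H,
    (TensorProduct.assoc k H H N)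
        ((TensorProduct.map A.α.toLinearMap (LinearMap.id : H →ₗ[k] H) v) ⊗ₜ[k] n')
      = (TensorProduct.map A.α.toLinearMap ((TensorProduct.mk k H N).flip n')) v := by
  intro v
  induction v using TensorProduct.induction_on with
  | zero => simp
  | tmul v1 v2 => simp
  | add x y hx hy => simp only [map_add, TensorProduct.add_tmul, hx, hy]

lemma free_rho_coassoc (m : H ⊗[k] N) :
    (TensorProduct.map (LinearMap.id : H →ₗ[k] H) (freeRho A Y.ν)) (freeRho A Y.ν m)
      = (TensorProduct.assoc k H H (H ⊗[k] N))
          ((TensorProduct.map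
              ((TensorProduct.map A.α.toLinearMap (LinearMap.id : H →ₗ[k] H)) ∘ₗ A.comul)
              (TensorProduct.congr A.α Y.ν).symm.toLinearMap) (freeRho A Y.ν m)) := by
  induction m using TensorProduct.induction_on with
  | zero => simp
  | tmul a n =>
      rw [freeRho_tmul, congr_symm_toLinearMap]
      have key1 : ∀ w : H ⊗[k] H,
          (TensorProduct.map (LinearMap.id : H →ₗ[k] H) (freeRho A Y.ν))
            ((TensorProduct.assoc k H H N)
              ((TensorProduct.map A.α.toLinearMap LinearMap.id w) ⊗ₜ[k] Y.ν.symm n))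
          = (TensorProduct.map (A.α.toLinearMap ∘ₗ A.α.toLinearMap)
              (TensorProduct.map A.α.toLinearMap
                ((TensorProduct.mk k H N).flip (Y.ν.symm (Y.ν.symm n)))))
              ((TensorProduct.map A.α.symm.toLinearMap A.comul) w) := by
        intro w
        induction w using TensorProduct.induction_on with
        | zero => simp
        | tmul w1 w2 =>
            simp only [TensorProduct.map_tmul, TensorProduct.assoc_tmul,
              LinearMap.id_coe, id_eq, LinearMap.comp_apply, LinearEquiv.coe_coe, LinearEquiv.coe_toLinearMap,
              freeRho_tmul, A.α.apply_symm_apply]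
            rw [assoc_map_mk]
        | add x y hx hy => simp only [map_add, TensorProduct.add_tmul, hx, hy]
      have key2 : ∀ w : H ⊗[k] H,
          (TensorProduct.assoc k H H (H ⊗[k] N))
            ((TensorProduct.map
                ((TensorProduct.map A.α.toLinearMap (LinearMap.id : H →ₗ[k] H)) ∘ₗ A.comul)
                (TensorProduct.map A.α.symm.toLinearMap Y.ν.symm.toLinearMap))
              ((TensorProduct.assoc k H H N)
                ((TensorProduct.map A.α.toLinearMap LinearMap.id w) ⊗ₜ[k] Y.ν.symm n)))
          = (TensorProduct.map (A.α.toLinearMap ∘ₗ A.α.toLinearMap)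
              (TensorProduct.map A.α.toLinearMap
                ((TensorProduct.mk k H N).flip (Y.ν.symm (Y.ν.symm n)))))
              ((TensorProduct.assoc k H H H)
                ((TensorProduct.map A.comul A.α.symm.toLinearMap) w)) := by
        intro w
        induction w using TensorProduct.induction_on with
        | zero => simp
        | tmul w1 w2 =>
            simp only [TensorProduct.map_tmul, TensorProduct.assoc_tmul,
              LinearMap.id_coe, id_eq, LinearMap.comp_apply, LinearEquiv.coe_coe, LinearEquiv.coe_toLinearMap,
              A.comul_alpha]
            generalize A.comul w1 = v
            induction v using TensorProduct.induction_on with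
            | zero => simp
            | tmul v1 v2 => simp
            | add x y hx hy =>
                simp only [map_add, TensorProduct.add_tmul, hx, hy]
        | add x y hx hy => simp only [map_add, TensorProduct.add_tmul, hx, hy]
      rw [key1, key2, ← A.hom_coassoc a]
  | add x y hx hy => simp [hx, hy]


lemma free_homcomm (m : H ⊗[k] N) :
    (TensorProduct.map (LinearMap.id : H →ₗ[k] H) (freeSigma A Y.coact))
        (freeRho A Y.ν m)
      = (TensorProduct.assoc k H (H ⊗[k] N) H)
          ((TensorProduct.map
              ((TensorProduct.map A.α.toLinearMap (LinearMap.id : H ⊗[k] N →ₗ[k] H ⊗[k] N))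
                ∘ₗ freeRho A Y.ν)
              A.α.symm.toLinearMap) (freeSigma A Y.coact m)) := by
  induction m using TensorProduct.induction_on with
  | zero => simp
  | tmul a n =>
      rw [freeRho_tmul, freeSigma_tmul2]
      have key1 : ∀ w : H ⊗[k] H,
          (TensorProduct.map (LinearMap.id : H →ₗ[k] H) (freeSigma A Y.coact))
            ((TensorProduct.assoc k H H N)
              ((TensorProduct.map A.α.toLinearMap LinearMap.id w) ⊗ₜ[k] Y.ν.symm n))
          = (TensorProduct.map (A.α.toLinearMap ∘ₗ A.α.toLinearMap)
              ((tmul2 (TensorProduct.mk k H N) A.mul).flip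
                ((TensorProduct.map Y.ν.symm.toLinearMap A.α.symm.toLinearMap)
                  (Y.coact n))))
              ((TensorProduct.map A.α.symm.toLinearMap A.comul) w) := by
        intro w
        induction w using TensorProduct.induction_on with
        | zero => simp
        | tmul w1 w2 =>
            simp only [TensorProduct.map_tmul, TensorProduct.assoc_tmul,
              LinearMap.id_coe, id_eq, LinearMap.comp_apply, LinearEquiv.coe_coe, LinearEquiv.coe_toLinearMap,
              LinearMap.flip_apply, A.α.apply_symm_apply, freeSigma_tmul2,
              coact_nuSymm]
        | add x y hx hy => simp only [map_add, TensorProduct.add_tmul, hx, hy]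
      have key2 : ∀ (w : H ⊗[k] H) (v : N ⊗[k] H),
          (TensorProduct.assoc k H (H ⊗[k] N) H)
            ((TensorProduct.map
                ((TensorProduct.map A.α.toLinearMap
                    (LinearMap.id : H ⊗[k] N →ₗ[k] H ⊗[k] N)) ∘ₗ freeRho A Y.ν)
                A.α.symm.toLinearMap)
              (tmul2 (TensorProduct.mk k H N) A.mul w v))
          = (TensorProduct.map (A.α.toLinearMap ∘ₗ A.α.toLinearMap)
              ((tmul2 (TensorProduct.mk k H N) A.mul).flip
                ((TensorProduct.map Y.ν.symm.toLinearMap A.α.symm.toLinearMap) v)))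
              ((TensorProduct.assoc k H H H)
                ((TensorProduct.map A.comul A.α.symm.toLinearMap) w)) := by
        intro w v
        induction w using TensorProduct.induction_on with
        | zero => simp
        | tmul w1 w2 =>
            induction v using TensorProduct.induction_on with
            | zero => simp
            | tmul n0 n1 =>
                simp only [tmul2_tmul, TensorProduct.map_tmul, TensorProduct.assoc_tmul,
                  LinearMap.id_coe, id_eq, LinearMap.comp_apply, LinearEquiv.coe_coe, LinearEquiv.coe_toLinearMap,
                  LinearMap.flip_apply, freeRho_tmul, TensorProduct.mk_apply,
                  alphaSymm_mul]
                generalize A.comul w1 = u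
                induction u using TensorProduct.induction_on with
                | zero => simp
                | tmul u1 u2 => simp
                | add x y hx hy => simp only [map_add, TensorProduct.add_tmul, hx, hy]
            | add x y hx hy =>
                simp only [map_add, LinearMap.add_apply, TensorProduct.tmul_add,
                  TensorProduct.map_add_right, hx, hy]
        | add x y hx hy =>
            simp only [map_add, LinearMap.add_apply, TensorProduct.add_tmul, hx, hy]
      rw [key1, key2, ← A.hom_coassoc a]
  | add x y hx hy => simp [hx, hy]


lemma free_sigma_coassoc (m : H ⊗[k] N) :
    (TensorProduct.map (freeSigma A Y.coact) A.α.symm.toLinearMap) (freeSigma A Y.coact m)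
      = (TensorProduct.assoc k (H ⊗[k] N) H H).symm
          ((TensorProduct.map (TensorProduct.congr A.α Y.ν).symm.toLinearMap A.comul)
            (freeSigma A Y.coact m)) := by
  induction m using TensorProduct.induction_on with
  | zero => simp
  | tmul a n =>
      rw [freeSigma_tmul2, congr_symm_toLinearMap]
      have claimL : ∀ (w : H ⊗[k] H) (v : N ⊗[k] H),
          (TensorProduct.map (freeSigma A Y.coact) A.α.symm.toLinearMap)
            (tmul2 (TensorProduct.mk k H N) A.mul w v)
          = tmul2 (tmul2 (TensorProduct.mk k H N) A.mul) A.mul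
              ((TensorProduct.map A.comul A.α.symm.toLinearMap) w)
              ((TensorProduct.map Y.coact A.α.symm.toLinearMap) v) := by
        intro w v
        induction w using TensorProduct.induction_on with
        | zero => simp
        | tmul a1 a2 =>
            induction v using TensorProduct.induction_on with
            | zero => simp
            | tmul n0 n1 =>
                simp only [tmul2_tmul, TensorProduct.map_tmul, LinearEquiv.coe_coe, LinearEquiv.coe_toLinearMap,
                  TensorProduct.mk_apply, freeSigma_tmul2, alphaSymm_mul]
            | add x y hx hy =>
                simp only [map_add, LinearMap.add_apply, TensorProduct.map_add_right,
                  hx, hy]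
        | add x y hx hy =>
            simp only [map_add, LinearMap.add_apply, hx, hy]
      have claimR : ∀ (w : H ⊗[k] H) (v : N ⊗[k] H),
          (TensorProduct.assoc k (H ⊗[k] N) H H).symm
            ((TensorProduct.map (TensorProduct.map A.α.symm.toLinearMap Y.ν.symm.toLinearMap)
                A.comul) (tmul2 (TensorProduct.mk k H N) A.mul w v))
          = tmul2 (tmul2 (TensorProduct.mk k H N) A.mul) A.mul
              ((TensorProduct.assoc k H H H).symm
                ((TensorProduct.map A.α.symm.toLinearMap A.comul) w))
              ((TensorProduct.assoc k N H H).symm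
                ((TensorProduct.map Y.ν.symm.toLinearMap A.comul) v)) := by
        intro w v
        induction w using TensorProduct.induction_on with
        | zero => simp
        | tmul a1 a2 =>
            induction v using TensorProduct.induction_on with
            | zero => simp
            | tmul n0 n1 =>
                simp only [tmul2_tmul, TensorProduct.map_tmul, LinearEquiv.coe_coe, LinearEquiv.coe_toLinearMap,
                  TensorProduct.mk_apply, A.comul_mul]
                generalize A.comul a2 = p
                generalize A.comul n1 = q
                induction p using TensorProduct.induction_on with
                | zero => simp
                | tmul p1 p2 =>
                    induction q using TensorProduct.induction_on with
                    | zero => simp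
                    | tmul q1 q2 => simp
                    | add x y hx hy =>
                        simp only [map_add, LinearMap.add_apply,
                          TensorProduct.tmul_add, hx, hy]
                | add x y hx hy =>
                    simp only [map_add, LinearMap.add_apply,
                      TensorProduct.tmul_add, hx, hy]
            | add x y hx hy =>
                simp only [map_add, LinearMap.add_apply, TensorProduct.map_add_right,
                  hx, hy]
        | add x y hx hy =>
            simp only [map_add, LinearMap.add_apply, hx, hy]
      rw [claimL, claimR, ← Y.coact_coassoc, ← A.hom_coassoc a,
        LinearEquiv.symm_apply_apply]
  | add x y hx hy => simp [hx, hy]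


lemma freeRact_flip (g : H) :
    (freeRact A Y.act).flip g = (tmul2 A.mul Y.act).flip (A.comul g) := rfl

noncomputable def rhoCovPhiL (h a : H) (n : N) :
    (H ⊗[k] H) ⊗[k] H →ₗ[k] H ⊗[k] (H ⊗[k] N) :=
  (TensorProduct.assoc k H H N).toLinearMap ∘ₗ
    TensorProduct.map
      ((TensorProduct.map A.α.toLinearMap (LinearMap.id : H →ₗ[k] H)) ∘ₗ
        (tmul2 A.mul A.mul (A.comul (A.mul (A.α.symm h) a))) ∘ₗ
        (TensorProduct.map A.α.toLinearMap A.α.toLinearMap))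
      ((Y.act n) ∘ₗ A.α.toLinearMap)

noncomputable def rhoCovPhiR (h a : H) (n : N) :
    H ⊗[k] (H ⊗[k] H) →ₗ[k] H ⊗[k] (H ⊗[k] N) :=
  TensorProduct.lift
    (((((TensorProduct.mapBilinear (RingHom.id k) H (H ⊗[k] N) H (H ⊗[k] N)) ∘ₗ
          (A.mul.flip ∘ₗ A.α.toLinearMap)).compl₂
        ((tmul2 A.mul Y.act).flip)).compr₂
      ((tmul2 A.mul (freeLact A Y.ν) (A.comul (A.α h))) ∘ₗ
        (LinearMap.applyₗ (freeRho A Y.ν (a ⊗ₜ[k] n))))))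

lemma free_rho_cov (h g : H) (m : H ⊗[k] N) :
    freeRho A Y.ν (freeRact A Y.act (freeLact A Y.ν h m) (A.α g))
      = tmul2 A.mul (freeLact A Y.ν) (A.comul (A.α h))
          (tmul2 A.mul (freeRact A Y.act) (freeRho A Y.ν m) (A.comul g)) := by
  induction m using TensorProduct.induction_on with
  | zero => simp
  | tmul a n =>
      rw [freeLact_tmul, freeRact_apply, A.comul_alpha g]
      have claimL : ∀ w : H ⊗[k] H,
          freeRho A Y.ν
            (tmul2 A.mul Y.act ((A.mul (A.α.symm h) a) ⊗ₜ[k] Y.ν n)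
              (TensorProduct.map A.α.toLinearMap A.α.toLinearMap w))
            = rhoCovPhiL A Y h a n
                ((TensorProduct.map A.comul A.α.symm.toLinearMap) w) := by
        intro w
        induction w using TensorProduct.induction_on with
        | zero => simp
        | tmul g1 g2 =>
            simp only [TensorProduct.map_tmul, tmul2_tmul, LinearEquiv.coe_coe, LinearEquiv.coe_toLinearMap,
              freeRho_tmul, rhoCovPhiL, LinearMap.comp_apply, LinearMap.id_coe, id_eq,
              A.comul_mul, A.comul_alpha, A.α.apply_symm_apply]
            rw [nuSymm_act]
            simp [A.α.symm_apply_apply, Y.ν.symm_apply_apply]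
        | add x y hx hy => simp only [map_add, LinearMap.map_add, hx, hy]
      have claimR : ∀ w : H ⊗[k] H,
          tmul2 A.mul (freeLact A Y.ν) (A.comul (A.α h))
              (tmul2 A.mul (freeRact A Y.act) (freeRho A Y.ν (a ⊗ₜ[k] n)) w)
            = rhoCovPhiR A Y h a n
                ((TensorProduct.map A.α.symm.toLinearMap A.comul) w) := by
        intro w
        induction w using TensorProduct.induction_on with
        | zero => simp
        | tmul g1 g2 =>
            simp only [TensorProduct.map_tmul, tmul2_tmul_right, LinearEquiv.coe_coe, LinearEquiv.coe_toLinearMap,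
              rhoCovPhiR, TensorProduct.lift.tmul, LinearMap.compr₂_apply,
              LinearMap.compl₂_apply, LinearMap.comp_apply,
              TensorProduct.mapBilinear_apply, applyl_apply,
              A.α.apply_symm_apply, freeRact_flip]
        | add x y hx hy => simp only [map_add, LinearMap.map_add, hx, hy]
      have claimM : ∀ u : (H ⊗[k] H) ⊗[k] H,
          rhoCovPhiL A Y h a n u
            = rhoCovPhiR A Y h a n ((TensorProduct.assoc k H H H) u) := by
        intro u
        induction u using TensorProduct.induction_on with
        | zero => simp
        | tmul x u3 =>
            induction x using TensorProduct.induction_on with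
            | zero => simp
            | tmul u1 u2 =>
                simp only [rhoCovPhiL, rhoCovPhiR, LinearMap.comp_apply,
                  TensorProduct.assoc_tmul, TensorProduct.map_tmul,
                  TensorProduct.lift.tmul, LinearMap.compr₂_apply,
                  LinearMap.compl₂_apply, TensorProduct.mapBilinear_apply,
                  applyl_apply, LinearMap.id_coe, id_eq,
                  LinearEquiv.coe_coe, LinearEquiv.coe_toLinearMap, freeRho_tmul]
                rw [show A.comul (A.mul (A.α.symm h) a)
                      = tmul2 A.mul A.mul (TensorProduct.map A.α.symm.toLinearMap
                          A.α.symm.toLinearMap (A.comul h)) (A.comul a) by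
                    rw [A.comul_mul, comul_alphaSymm],
                  A.comul_alpha h]
                generalize A.comul h = q
                generalize A.comul a = s
                induction q using TensorProduct.induction_on with
                | zero => simp
                | tmul h1 h2 =>
                    induction s using TensorProduct.induction_on with
                    | zero => simp
                    | tmul a1 a2 =>
                        simp only [TensorProduct.map_tmul, tmul2_tmul,
                          TensorProduct.assoc_tmul, LinearEquiv.coe_coe, LinearEquiv.coe_toLinearMap,
                          LinearMap.flip_apply, applyl_apply, freeLact_tmul,
                          LinearMap.id_coe, id_eq,
                          A.α.symm_apply_apply, A.α.apply_symm_apply, A.alpha_mul]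
                        rw [A.hom_assoc h1 (A.α a1) (A.α u1)]
                        have e2 := A.hom_assoc (A.α.symm h2) a2 u2
                        rw [A.α.apply_symm_apply] at e2
                        rw [← e2, Y.nu_act, Y.ν.apply_symm_apply]
                    | add x y hx hy =>
                        simp only [map_add, LinearMap.map_add, LinearMap.add_apply,
                          TensorProduct.map_add_left, TensorProduct.map_add_right,
                          TensorProduct.add_tmul, TensorProduct.tmul_add, hx, hy]
                | add x y hx hy =>
                    simp only [map_add, LinearMap.map_add, LinearMap.add_apply,
                      TensorProduct.map_add_left, TensorProduct.map_add_right,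
                      TensorProduct.add_tmul, TensorProduct.tmul_add, hx, hy]
            | add x y hx hy =>
                simp only [map_add, LinearMap.map_add, TensorProduct.add_tmul, hx, hy]
        | add x y hx hy => simp only [map_add, LinearMap.map_add, hx, hy]
      rw [claimL, claimM, A.hom_coassoc g, claimR]
  | add x y hx hy =>
      simp only [freeRact_apply] at hx hy
      simp [hx, hy]


noncomputable def sigCovPhiL (h a : H) (n : N) :
    (H ⊗[k] H) ⊗[k] H →ₗ[k] (H ⊗[k] N) ⊗[k] H :=
  TensorProduct.lift
    (((tmul2 (TensorProduct.mk k H N) A.mul ∘ₗ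
        ((tmul2 A.mul A.mul (A.comul (A.mul (A.α.symm h) a))) ∘ₗ
          (TensorProduct.map A.α.toLinearMap A.α.toLinearMap))).compl₂
      ((TensorProduct.map Y.ν.toLinearMap A.α.toLinearMap) ∘ₗ Y.coact ∘ₗ (Y.act n) ∘ₗ
        A.α.toLinearMap)))

noncomputable def sigCovXi (h a c : H) : (N ⊗[k] H) →ₗ[k] (H ⊗[k] N) ⊗[k] H :=
  tmul2 (((TensorProduct.mk k H N) ∘ₗ (A.mul.flip (A.α c))).compl₂ Y.ν.toLinearMap)
    (A.mul.compr₂ A.α.toLinearMap) (A.comul (A.mul (A.α.symm h) a))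

noncomputable def sigCovPhiR (h a : H) (n : N) :
    (H ⊗[k] H) ⊗[k] H →ₗ[k] (H ⊗[k] N) ⊗[k] H :=
  TensorProduct.lift
    (((((TensorProduct.mapBilinear (RingHom.id k) (H ⊗[k] N) H (H ⊗[k] N) H) ∘ₗ
          (tmul2 A.mul Y.act).flip).compl₂
        (A.mul.flip ∘ₗ A.α.toLinearMap)).compr₂
      ((tmul2 (freeLact A Y.ν) A.mul (A.comul (A.α h))) ∘ₗ
        (LinearMap.applyₗ (freeSigma A Y.coact (a ⊗ₜ[k] n))))))

lemma free_sigma_cov (h g : H) (m : H ⊗[k] N) :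
    freeSigma A Y.coact (freeRact A Y.act (freeLact A Y.ν h m) (A.α g))
      = tmul2 (freeLact A Y.ν) A.mul (A.comul (A.α h))
          (tmul2 (freeRact A Y.act) A.mul (freeSigma A Y.coact m) (A.comul g)) := by
  induction m using TensorProduct.induction_on with
  | zero => simp
  | tmul a n =>
      rw [freeLact_tmul, freeRact_apply, A.comul_alpha g]
      have hco : (TensorProduct.map A.comul A.α.symm.toLinearMap) (A.comul g)
          = (TensorProduct.assoc k H H H).symm
              ((TensorProduct.map A.α.symm.toLinearMap A.comul) (A.comul g)) := by
        rw [← A.hom_coassoc g, LinearEquiv.symm_apply_apply]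
      have claimL : ∀ w : H ⊗[k] H,
          freeSigma A Y.coact
            (tmul2 A.mul Y.act ((A.mul (A.α.symm h) a) ⊗ₜ[k] Y.ν n)
              (TensorProduct.map A.α.toLinearMap A.α.toLinearMap w))
            = sigCovPhiL A Y h a n
                ((TensorProduct.map A.comul A.α.symm.toLinearMap) w) := by
        intro w
        induction w using TensorProduct.induction_on with
        | zero => simp
        | tmul g1 g2 =>
            have e1 : Y.act (Y.ν n) (A.α g2) = Y.ν (Y.act n g2) := (Y.nu_act n g2).symm
            simp only [TensorProduct.map_tmul, tmul2_tmul, LinearEquiv.coe_coe, LinearEquiv.coe_toLinearMap,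
              freeSigma_tmul2, sigCovPhiL, TensorProduct.lift.tmul,
              LinearMap.compl₂_apply, LinearMap.comp_apply, e1, Y.coact_nu,
              A.comul_mul, A.comul_alpha, A.α.apply_symm_apply]
        | add x y hx hy => simp only [map_add, LinearMap.map_add, hx, hy]
      have claimR : ∀ w : H ⊗[k] H,
          tmul2 (freeLact A Y.ν) A.mul (A.comul (A.α h))
              (tmul2 (freeRact A Y.act) A.mul (freeSigma A Y.coact (a ⊗ₜ[k] n)) w)
            = sigCovPhiR A Y h a n
                ((TensorProduct.map A.comul A.α.symm.toLinearMap) w) := by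
        intro w
        induction w using TensorProduct.induction_on with
        | zero => simp
        | tmul g1 g2 =>
            simp only [TensorProduct.map_tmul, tmul2_tmul_right, LinearEquiv.coe_coe, LinearEquiv.coe_toLinearMap,
              sigCovPhiR, TensorProduct.lift.tmul, LinearMap.compr₂_apply,
              LinearMap.compl₂_apply, LinearMap.comp_apply,
              TensorProduct.mapBilinear_apply, applyl_apply,
              A.α.apply_symm_apply, freeRact_flip]
        | add x y hx hy => simp only [map_add, LinearMap.map_add, hx, hy]
      rw [claimL, claimR]
      simp only [hco]
      generalize A.comul g = w
      induction w using TensorProduct.induction_on with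
      | zero => simp
      | tmul g1 g2 =>
          simp only [TensorProduct.map_tmul, LinearEquiv.coe_coe, LinearEquiv.coe_toLinearMap]
          have e2 : A.comul g2
              = TensorProduct.map A.α.symm.toLinearMap A.α.symm.toLinearMap
                  (A.comul (A.α g2)) := by
            rw [A.comul_alpha, ← LinearMap.comp_apply, ← TensorProduct.map_comp]
            have h3 : A.α.symm.toLinearMap ∘ₗ A.α.toLinearMap = LinearMap.id := by
              ext x; simp
            rw [h3, TensorProduct.map_id, LinearMap.id_apply]
          rw [e2]
          have SA : ∀ (c : H) (y : H ⊗[k] H),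
              sigCovPhiL A Y h a n
                ((TensorProduct.assoc k H H H).symm
                  (c ⊗ₜ[k] (TensorProduct.map A.α.symm.toLinearMap A.α.symm.toLinearMap y)))
              = sigCovXi A Y h a c
                  (((TensorProduct.map (LinearMap.id : N →ₗ[k] N)
                        (A.α.symm.toLinearMap ∘ₗ TensorProduct.lift A.mul)) ∘ₗ
                      (TensorProduct.leftComm k H N H).toLinearMap)
                    ((TensorProduct.map (LinearMap.id : H →ₗ[k] H)
                        (Y.coact ∘ₗ Y.act n)) y)) := by
            intro c y
            induction y using TensorProduct.induction_on with
            | zero => simp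
            | tmul y1 y2 =>
                simp only [TensorProduct.map_tmul, TensorProduct.assoc_symm_tmul,
                  sigCovPhiL, sigCovXi, TensorProduct.lift.tmul, LinearMap.compl₂_apply,
                  LinearMap.comp_apply, LinearEquiv.coe_coe, LinearEquiv.coe_toLinearMap, LinearMap.id_coe, id_eq,
                  A.α.apply_symm_apply]
                generalize Y.coact (Y.act n y2) = t
                generalize A.comul (A.mul (A.α.symm h) a) = r
                induction t using TensorProduct.induction_on with
                | zero => simp
                | tmul u s =>
                    simp only [TensorProduct.map_tmul, TensorProduct.leftComm_tmul,
                      tmul2_tmul_right, LinearMap.id_coe, id_eq, LinearMap.comp_apply,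
                      LinearEquiv.coe_coe, LinearEquiv.coe_toLinearMap]
                    induction r using TensorProduct.induction_on with
                    | zero => simp
                    | tmul p1 p2 =>
                        simp only [TensorProduct.map_tmul, tmul2_tmul,
                          LinearMap.flip_apply, LinearMap.compl₂_apply,
                          LinearMap.comp_apply, LinearMap.compr₂_apply,
                          TensorProduct.mk_apply, TensorProduct.lift.tmul,
                          LinearEquiv.coe_coe, LinearEquiv.coe_toLinearMap]
                        have e5 : A.α (A.mul p2 (A.α.symm (A.mul y1 s)))
                            = A.mul (A.mul p2 y1) (A.α s) := by
                          rw [A.alpha_mul, A.α.apply_symm_apply, A.hom_assoc]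
                        rw [e5]
                    | add x y hx hy =>
                        simp only [map_add, LinearMap.map_add, LinearMap.add_apply,
                          TensorProduct.add_tmul, TensorProduct.tmul_add, hx, hy]
                | add x y hx hy =>
                    simp only [map_add, LinearMap.map_add, LinearMap.add_apply,
                      TensorProduct.map_add_left, TensorProduct.map_add_right,
                      TensorProduct.add_tmul, TensorProduct.tmul_add, hx, hy]
            | add x y hx hy =>
                simp only [map_add, LinearMap.map_add, LinearMap.add_apply,
                  TensorProduct.add_tmul, TensorProduct.tmul_add, hx, hy]
          rw [SA, ← Y.yd n (A.α g2)]
          have SB : ∀ (c : H) (y : H ⊗[k] H),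
              sigCovXi A Y h a c
                (tmul2 (Y.act.compl₂ A.α.symm.toLinearMap)
                  (A.mul.compl₂ A.α.symm.toLinearMap) (Y.coact n) y)
              = sigCovPhiR A Y h a n
                  ((TensorProduct.assoc k H H H).symm
                    (c ⊗ₜ[k] (TensorProduct.map A.α.symm.toLinearMap
                        A.α.symm.toLinearMap y))) := by
            intro c y
            induction y using TensorProduct.induction_on with
            | zero => simp
            | tmul y1 y2 =>
                simp only [sigCovXi, sigCovPhiR, TensorProduct.map_tmul,
                  TensorProduct.assoc_symm_tmul, TensorProduct.lift.tmul,
                  LinearMap.compr₂_apply, LinearMap.compl₂_apply, LinearMap.comp_apply,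
                  TensorProduct.mapBilinear_apply, applyl_apply, LinearMap.flip_apply,
                  LinearEquiv.coe_coe, LinearEquiv.coe_toLinearMap]
                rw [show A.comul (A.mul (A.α.symm h) a)
                      = tmul2 A.mul A.mul (TensorProduct.map A.α.symm.toLinearMap
                          A.α.symm.toLinearMap (A.comul h)) (A.comul a) by
                    rw [A.comul_mul, comul_alphaSymm],
                  A.comul_alpha h, freeSigma_tmul2]
                generalize A.comul h = q
                generalize A.comul a = s
                generalize Y.coact n = t
                induction q using TensorProduct.induction_on with
                | zero => simp
                | tmul h1 h2 =>
                    induction s using TensorProduct.induction_on with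
                    | zero => simp
                    | tmul a1 a2 =>
                        induction t using TensorProduct.induction_on with
                        | zero => simp
                        | tmul n0 n1 =>
                            simp only [TensorProduct.map_tmul, tmul2_tmul,
                              TensorProduct.lift.tmul,
                              LinearMap.compl₂_apply, LinearMap.compr₂_apply,
                              LinearMap.comp_apply, LinearMap.flip_apply,
                              TensorProduct.mk_apply, LinearEquiv.coe_coe, LinearEquiv.coe_toLinearMap,
                              A.α.apply_symm_apply, A.α.symm_apply_apply,
                              freeLact_tmul]
                            have e1 := A.hom_assoc (A.α.symm h1) a1 c
                            rw [A.α.apply_symm_apply] at e1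
                            have e3 : A.mul (A.α a2) (A.mul n1 (A.α.symm y2))
                                = A.mul (A.mul a2 n1) y2 := by
                              have e := A.hom_assoc a2 n1 (A.α.symm y2)
                              rw [A.α.apply_symm_apply] at e
                              exact e
                            have e4 : A.α (A.mul (A.mul (A.α.symm h2) a2)
                                  (A.mul n1 (A.α.symm y2)))
                                = A.mul (A.α h2) (A.mul (A.mul a2 n1) y2) := by
                              rw [A.alpha_mul, A.alpha_mul, A.α.apply_symm_apply,
                                ← A.hom_assoc h2 (A.α a2) (A.mul n1 (A.α.symm y2)), e3]
                            rw [← e1, e4]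
                        | add x y hx hy =>
                            simp only [map_add, LinearMap.map_add, LinearMap.add_apply,
                              TensorProduct.map_add_left, TensorProduct.map_add_right,
                              TensorProduct.add_tmul, TensorProduct.tmul_add, hx, hy]
                    | add x y hx hy =>
                        simp only [map_add, LinearMap.map_add, LinearMap.add_apply,
                          TensorProduct.map_add_left, TensorProduct.map_add_right,
                          TensorProduct.add_tmul, TensorProduct.tmul_add, hx, hy]
                | add x y hx hy =>
                    simp only [map_add, LinearMap.map_add, LinearMap.add_apply,
                      TensorProduct.map_add_left, TensorProduct.map_add_right,
                      TensorProduct.add_tmul, TensorProduct.tmul_add, hx, hy]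
            | add x y hx hy =>
                simp only [map_add, LinearMap.map_add, LinearMap.add_apply,
                  TensorProduct.map_add_left, TensorProduct.map_add_right,
                  TensorProduct.add_tmul, TensorProduct.tmul_add, hx, hy]
          exact SB (A.α.symm g1) (A.comul (A.α g2))
      | add x y hx hy => simp only [map_add, LinearMap.map_add, hx, hy]
  | add x y hx hy =>
      simp only [freeRact_apply] at hx hy
      simp [hx, hy]

end Helpers

/-- for a Yetter-Drinfel'd Hom-module `(N,ν)`, the canonical maps turn
`H ⊗ N` into a bicovariant `(H,α)`-Hom-bimodule. -/
theorem free_bicovariant_bimodule {k H : Type*} [CommRing k] [AddCommGroup H] [Module k H]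
    (A : MonHomHopf k H) {N : Type*} [AddCommGroup N] [Module k N]
    (Y : YDmod A N) :
    ∃ B : BicovBimod A (H ⊗[k] N),
      B.μ = TensorProduct.congr A.α Y.ν ∧
      B.lact = freeLact A Y.ν ∧
      B.ract = freeRact A Y.act ∧
      B.rho = freeRho A Y.ν ∧
      B.sigma = freeSigma A Y.coact := by
  refine ⟨{ μ := TensorProduct.congr A.α Y.ν
            lact := freeLact A Y.ν
            ract := freeRact A Y.act
            rho := freeRho A Y.ν
            sigma := freeSigma A Y.coact
            lact_assoc := free_lact_assoc A Y
            lact_one := free_lact_one A Y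
            mu_lact := free_mu_lact A Y
            ract_assoc := free_ract_assoc A Y
            ract_one := free_ract_one A Y
            mu_ract := free_mu_ract A Y
            bimod := free_bimod A Y
            rho_coassoc := free_rho_coassoc A Y
            rho_counit := free_rho_counit A Y
            rho_mu := free_rho_mu A Y
            rho_cov := free_rho_cov A Y
            sigma_coassoc := free_sigma_coassoc A Y
            sigma_counit := free_sigma_counit A Y
            sigma_mu := free_sigma_mu A Y
            sigma_cov := free_sigma_cov A Y
            homcomm := free_homcomm A Y }, rfl, rfl, rfl, rfl, rfl⟩
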